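/- Let P and Q be Pareto sets (antichains under coordinatewise ≤) of points with integer coordinates in [0,W]², where the minimum x-coordinate in each of P and Q is 0. Define arrays A, B : {0,...,W} → ℤ by A[i] = min over p ∈ P with p.x ≤ i of p.y (and W+1 if no such p exists), similarly B from Q. Then for any point s = p+q in the Pareto sum of P and Q (the set of non-dominated points of the Minkowski sum P+Q), the min-plus convolution C of A and B satisfies C[s.x] = s.y. -/
import Mathlib


/-- For Pareto sets `P, Q ⊆ [0,W]² ∩ ℤ²` with minimum x-coordinate 0,
and the derived arrays `A, B` with min-plus convolution `C`, every non-dominated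
point `s = p + q` of the Minkowski sum satisfies `C[s.x] = s.y`. -/
theorem pareto_sum_via_conv (W : ℤ) (hW : 0 ≤ W)
    (P Q : Set (ℤ × ℤ))
    (hPareto_P : ∀ a ∈ P, ∀ b ∈ P, ¬(a.1 ≤ b.1 ∧ a.2 ≤ b.2 ∧ a ≠ b))
    (hPareto_Q : ∀ a ∈ Q, ∀ b ∈ Q, ¬(a.1 ≤ b.1 ∧ a.2 ≤ b.2 ∧ a ≠ b))
    (hPW : ∀ p ∈ P, 0 ≤ p.1 ∧ p.1 ≤ W ∧ 0 ≤ p.2 ∧ p.2 ≤ W)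
    (hQW : ∀ q ∈ Q, 0 ≤ q.1 ∧ q.1 ≤ W ∧ 0 ≤ q.2 ∧ q.2 ≤ W)
    (hP0 : ∃ p ∈ P, p.1 = 0) (hQ0 : ∃ q ∈ Q, q.1 = 0)
    (A B : ℤ → ℤ)
    (hA : ∀ i : ℤ, 0 ≤ i → i ≤ W →
      (((∃ p ∈ P, p.1 ≤ i) →
        (∃ p ∈ P, p.1 ≤ i ∧ A i = p.2) ∧ (∀ p ∈ P, p.1 ≤ i → A i ≤ p.2)) ∧
       ((∀ p ∈ P, ¬ p.1 ≤ i) → A i = W + 1)))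
    (hB : ∀ i : ℤ, 0 ≤ i → i ≤ W →
      (((∃ q ∈ Q, q.1 ≤ i) →
        (∃ q ∈ Q, q.1 ≤ i ∧ B i = q.2) ∧ (∀ q ∈ Q, q.1 ≤ i → B i ≤ q.2)) ∧
       ((∀ q ∈ Q, ¬ q.1 ≤ i) → B i = W + 1)))
    (C : ℤ → ℤ)
    (hC : ∀ k : ℤ, 0 ≤ k → k ≤ 2 * W →
      IsLeast {v : ℤ | ∃ i j : ℤ, 0 ≤ i ∧ i ≤ W ∧ 0 ≤ j ∧ j ≤ W ∧ i + j = k ∧ v = A i + B j}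
        (C k)) :
    ∀ p ∈ P, ∀ q ∈ Q,
      (∀ p' ∈ P, ∀ q' ∈ Q,
        ¬((p' + q').1 ≤ (p + q).1 ∧ (p' + q').2 ≤ (p + q).2 ∧ p' + q' ≠ p + q)) →
      C (p.1 + q.1) = p.2 + q.2 := by
  intro p hp q hq hnd
  obtain ⟨hp1, hp2, hp3, hp4⟩ := hPW p hp
  obtain ⟨hq1, hq2, hq3, hq4⟩ := hQW q hq
  obtain ⟨hmem, hlb⟩ := hC (p.1 + q.1) (by linarith) (by linarith)
  -- upper bound
  have hAle : A p.1 ≤ p.2 := ((hA p.1 hp1 hp2).1 ⟨p, hp, le_rfl⟩).2 p hp le_rfl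
  have hBle : B q.1 ≤ q.2 := ((hB q.1 hq1 hq2).1 ⟨q, hq, le_rfl⟩).2 q hq le_rfl
  have hub : C (p.1 + q.1) ≤ p.2 + q.2 := by
    have h1 : A p.1 + B q.1 ∈ {v : ℤ | ∃ i j : ℤ, 0 ≤ i ∧ i ≤ W ∧ 0 ≤ j ∧ j ≤ W ∧
        i + j = p.1 + q.1 ∧ v = A i + B j} :=
      ⟨p.1, q.1, hp1, hp2, hq1, hq2, rfl, rfl⟩
    have := hlb h1
    linarith
  -- lower bound via witnesses
  obtain ⟨i, j, hi0, hiW, hj0, hjW, hij, hCeq⟩ := hmem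
  obtain ⟨p₀, hp₀, hp₀x⟩ := hP0
  obtain ⟨q₀, hq₀, hq₀x⟩ := hQ0
  obtain ⟨p', hp', hp'le, hAi⟩ := ((hA i hi0 hiW).1 ⟨p₀, hp₀, by omega⟩).1
  obtain ⟨q', hq', hq'le, hBj⟩ := ((hB j hj0 hjW).1 ⟨q₀, hq₀, by omega⟩).1
  have hCval : C (p.1 + q.1) = p'.2 + q'.2 := by rw [hCeq, hAi, hBj]
  have h1 : (p' + q').1 ≤ (p + q).1 := by
    simp only [Prod.fst_add]; omega
  have h2 : (p' + q').2 ≤ (p + q).2 := by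
    simp only [Prod.snd_add]; omega
  have heq : p' + q' = p + q := by
    by_contra hne
    exact hnd p' hp' q' hq' ⟨h1, h2, hne⟩
  have : (p' + q').2 = (p + q).2 := by rw [heq]
  simp only [Prod.snd_add] at this
  omega
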